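/- Let (A, ∗) be an anti-Zinbiel algebra, i.e., a vector space with bilinear map ∗ satisfying x∗(y∗z) = -(x∗y+y∗x)∗z = -(y∗z+z∗y)∗x = z∗(y∗x) and z∗(x∗y) = x∗(z∗y). Then the operation x⋆y = x∗y + y∗x makes A a commutative associative algebra. -/
import Mathlib


/-- An anti-Zinbiel algebra structure on a vector space `A`. -/
def IsAntiZinbiel {k A : Type*} [Field k] [AddCommGroup A] [Module k A]
    (s : A →ₗ[k] A →ₗ[k] A) : Prop :=
  (∀ x y z, s x (s y z) = - s (s x y + s y x) z) ∧
  (∀ x y z, s x (s y z) = - s (s y z + s z y) x) ∧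
  (∀ x y z, s x (s y z) = s z (s y x)) ∧
  (∀ x y z, s z (s x y) = s x (s z y))

/-- the operation `x ⋆ y = x ∗ y + y ∗ x` on an anti-Zinbiel algebra is
commutative and associative. -/
theorem antiZinbiel_star_comm_assoc {k A : Type*} [Field k] [AddCommGroup A] [Module k A]
    (s : A →ₗ[k] A →ₗ[k] A) (h : IsAntiZinbiel s) :
    (∀ x y : A, s x y + s y x = s y x + s x y) ∧
    (∀ x y z : A,
      s (s x y + s y x) z + s z (s x y + s y x) =
        s x (s y z + s z y) + s (s y z + s z y) x) := by
  obtain ⟨h1, h2, h3, h4⟩ := h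
  have key : ∀ a b c : A, s a (s b c) = s a (s c b) := by
    intro a b c
    rw [← h4 a b c, h3 c a b, h4 a c b]
  constructor
  · intro x y; exact add_comm _ _
  · intro x y z
    have e1 : s (s x y + s y x) z = - s x (s y z) := by rw [h1 x y z, neg_neg]
    have e2 : s (s y z + s z y) x = - s x (s y z) := by rw [h2 x y z, neg_neg]
    have e3 : s z (s x y + s y x) = s x (s y z) + s x (s y z) := by
      rw [map_add, h4 x y z, h4 y x z, key x z y, key y z x, h4 x z y]
    have e4 : s x (s y z + s z y) = s x (s y z) + s x (s y z) := by
      rw [map_add, key x z y]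
    rw [e1, e2, e3, e4]
    abel
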